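/- Let φ ∈ (−π, π], set w = e^{iφ}, and let s be a real number with |s| < 2/√3. Then the series S(s) = Σ_{n=1}^∞ (i^n/n!) · [Γ(3n/2 − 1)/Γ(n/2)] · 3^{1−n} · e^{iφ(1/2 − 3n/4)} · s^n converges absolutely (and the convergence is uniform on |s| ≤ r for every r < 2/√3), and the complex number α = −e^{iφ/2} + S(s) satisfies the cubic equation w·α − α³/3 = −(2/3)·e^{i·3φ/2} − s². -/

import Mathlib

open Complex Filter

/-- The `n`-th term of the series `S(s)` from Lemma 1 (series inversion around the
saddle point `-w^{1/2}`), with `w = e^{iφ}`. -/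
noncomputable def saddleTerm (φ : ℝ) (n : ℕ) (s : ℝ) : ℂ :=
  Complex.I ^ n / (n.factorial : ℂ) *
    ((Real.Gamma (3 * n / 2 - 1) / Real.Gamma (n / 2) : ℝ) : ℂ) *
    (3 : ℂ) ^ (1 - (n : ℤ)) *
    Complex.exp (Complex.I * φ * (1 / 2 - 3 * n / 4)) * (s : ℂ) ^ n

open Polynomial Finset

namespace SaddleAux

noncomputable def Ap : ℕ → Polynomial ℝ
  | 0 => 1
  | (k+1) => Polynomial.C ((((k+1).factorial : ℝ))⁻¹) *
      (Polynomial.X * ∏ j ∈ Finset.range k, (Polynomial.X + Polynomial.C ((3*(k+1):ℝ)/2 - (j+1))))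

noncomputable def A (n : ℕ) (r : ℝ) : ℝ := (Ap n).eval r

@[simp] lemma A_zero (r : ℝ) : A 0 r = 1 := by simp [A, Ap]

lemma A_succ (k : ℕ) (r : ℝ) :
    A (k+1) r = (((k+1).factorial : ℝ))⁻¹ *
      (r * ∏ j ∈ Finset.range k, (r + ((3*(k+1):ℝ)/2 - (j+1)))) := by
  simp [A, Ap, eval_prod]

lemma A_zero_arg (k : ℕ) : A (k+1) 0 = 0 := by simp [A_succ]

lemma pascal_eval (k : ℕ) (r : ℝ) : A (k+1) r - A (k+1) (r-1) = A k (r + 1/2) := by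
  cases k with
  | zero => simp [A_succ]
  | succ m =>
    set P : ℝ := ∏ j ∈ Finset.range m, (r + 3*((m:ℝ)+2)/2 - ((j:ℝ)+2)) with hP
    have h1 : A (m+2) r = (((m+2).factorial : ℝ))⁻¹ *
        (r * ((r + 3*((m:ℝ)+2)/2 - 1) * P)) := by
      rw [A_succ, Finset.prod_range_succ']
      rw [show (∏ j ∈ Finset.range m, (r + (3*(((m:ℕ)+1:ℕ)+1:ℝ)/2 - (((j+1):ℕ)+1:ℝ)))) = P from
        Finset.prod_congr rfl (by intro j _; push_cast; ring)]
      push_cast; ring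
    have h2 : A (m+2) (r-1) = (((m+2).factorial : ℝ))⁻¹ *
        ((r-1) * (P * (r + 3*((m:ℝ)+2)/2 - ((m:ℝ)+2)))) := by
      rw [A_succ, Finset.prod_range_succ]
      rw [show (∏ j ∈ Finset.range m, (r - 1 + (3*(((m:ℕ)+1:ℕ)+1:ℝ)/2 - ((j:ℝ)+1)))) = P from
        Finset.prod_congr rfl (by intro j _; push_cast; ring)]
      push_cast; ring
    have h3 : A (m+1) (r+1/2) = (((m+1).factorial : ℝ))⁻¹ * ((r+1/2) * P) := by
      rw [A_succ]
      rw [show (∏ j ∈ Finset.range m, (r + 1/2 + (3*((m:ℕ)+1:ℝ)/2 - ((j:ℝ)+1)))) = P from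
        Finset.prod_congr rfl (by intro j _; push_cast; ring)]
    rw [h1, h2, h3]
    have hfac : ((m+2).factorial : ℝ) = ((m:ℝ)+2) * ((m+1).factorial : ℝ) := by
      rw [Nat.factorial_succ]; push_cast; ring
    have hne : ((m+1).factorial : ℝ) ≠ 0 := by positivity
    have hne2 : ((m:ℝ)+2) ≠ 0 := by positivity
    rw [hfac]
    field_simp
    ring


@[simp] lemma Ap_zero : Ap 0 = 1 := rfl

lemma pascal_poly (k : ℕ) :
    Ap (k+1) - (Ap (k+1)).comp (X - C 1) = (Ap k).comp (X + C (1/2)) := by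
  apply Polynomial.funext
  intro r
  have := pascal_eval k r
  simpa [A, eval_comp] using this

lemma shift_invariant_zero (p : Polynomial ℝ)
    (h : p.comp (X - C 1) = p) (h0 : p.eval 0 = 0) : p = 0 := by
  have key : ∀ m : ℕ, p.eval (m : ℝ) = 0 := by
    intro m
    induction m with
    | zero => simpa using h0
    | succ n ih =>
      have h1 := congrArg (fun q => Polynomial.eval ((n:ℝ)+1) q) h
      simp only [eval_comp, eval_sub, eval_X, eval_C] at h1
      have h2 : ((n:ℝ) + 1 - 1) = (n:ℝ) := by ring
      rw [h2] at h1
      push_cast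
      rw [← h1]; exact ih
  apply Polynomial.eq_zero_of_infinite_isRoot
  apply Set.infinite_of_injective_forall_mem (f := fun m : ℕ => (m : ℝ))
    Nat.cast_injective
  intro m; exact key m

theorem convP : ∀ n : ℕ, ∀ r : ℝ,
    ∑ k ∈ Finset.range (n+1), C (A k r) * Ap (n-k) = (Ap n).comp (X + C r) := by
  intro n
  induction n with
  | zero => intro r; simp [A_zero]
  | succ n IH =>
    intro r
    set T1 : Polynomial ℝ := ∑ k ∈ Finset.range (n+2), C (A k r) * Ap (n+1-k) with hT1
    set T2 : Polynomial ℝ := (Ap (n+1)).comp (X + C r) with hT2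
    have stepA : T1 - T1.comp (X - C 1) =
        ∑ k ∈ Finset.range (n+1), C (A k r) * (Ap (n-k)).comp (X + C (1/2)) := by
      rw [hT1, Polynomial.sum_comp]
      simp only [mul_comp, C_comp]
      rw [← Finset.sum_sub_distrib]
      rw [Finset.sum_range_succ]
      have hlast : C (A (n+1) r) * Ap (n+1-(n+1)) -
          C (A (n+1) r) * (Ap (n+1-(n+1))).comp (X - C 1) = 0 := by
        simp
      rw [hlast, add_zero]
      apply Finset.sum_congr rfl
      intro k hk
      rw [← mul_sub]
      congr 1
      have hnk : n + 1 - k = (n - k) + 1 := by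
        rw [Finset.mem_range] at hk; omega
      rw [hnk, pascal_poly]
    have stepB : T2 - T2.comp (X - C 1) = ((Ap n).comp (X + C r)).comp (X + C (1/2)) := by
      have hp := congrArg (fun q => q.comp (X + C r)) (pascal_poly n)
      simp only [sub_comp] at hp
      rw [Polynomial.comp_assoc, Polynomial.comp_assoc] at hp
      have e1 : ((X : Polynomial ℝ) - C 1).comp (X + C r) = (X + C r).comp (X - C 1) := by
        simp only [sub_comp, add_comp, X_comp, C_comp]; ring
      have e2 : ((X : Polynomial ℝ) + C (1/2)).comp (X + C r) = (X + C r).comp (X + C (1/2)) := by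
        simp only [add_comp, X_comp, C_comp]; ring
      rw [e1, e2] at hp
      rw [hT2, Polynomial.comp_assoc, Polynomial.comp_assoc]
      exact hp
    have claim1 : (T1 - T2).comp (X - C 1) = T1 - T2 := by
      have hz : (T1 - T2) - (T1 - T2).comp (X - C 1) =
          ((∑ k ∈ Finset.range (n+1), C (A k r) * Ap (n-k)) - (Ap n).comp (X + C r)).comp
            (X + C (1/2)) := by
        rw [sub_comp (p := T1) (q := T2)]
        rw [show T1 - T2 - (T1.comp (X - C 1) - T2.comp (X - C 1)) =
          (T1 - T1.comp (X - C 1)) - (T2 - T2.comp (X - C 1)) by ring]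
        rw [stepA, stepB, sub_comp, Polynomial.sum_comp]
        simp only [mul_comp, C_comp]
      rw [IH r] at hz
      simp only [sub_self, zero_comp] at hz
      exact (sub_eq_zero.mp hz).symm
    have claim2 : (T1 - T2).eval 0 = 0 := by
      rw [hT1, hT2]
      simp only [eval_sub, eval_finset_sum, eval_mul, eval_C, eval_comp, eval_add, eval_X]
      rw [Finset.sum_eq_single (n+1)]
      · simp [A]
      · intro k hk hkne
        have : n + 1 - k = (n - k) + 1 := by rw [Finset.mem_range] at hk; omega
        rw [this]
        have := A_zero_arg (n - k)
        simp only [A] at this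
        rw [this, mul_zero]
      · intro h; exact absurd (Finset.self_mem_range_succ (n+1)) h
    have := shift_invariant_zero (T1 - T2) claim1 claim2
    have : T1 = T2 := by
      have h := sub_eq_zero.mp this
      exact h
    exact this

/-- Pointwise convolution identity. -/
theorem convA (n : ℕ) (r s : ℝ) :
    ∑ k ∈ Finset.range (n+1), A k r * A (n-k) s = A n (r + s) := by
  have := congrArg (fun q => Polynomial.eval s q) (convP n r)
  simp only [eval_finset_sum, eval_mul, eval_C, eval_comp, eval_add, eval_X] at this
  simpa [A, add_comm] using this


lemma A_pos {r : ℝ} (hr : 0 < r) (n : ℕ) : 0 < A n r := by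
  cases n with
  | zero => rw [A_zero]; norm_num
  | succ k =>
    rw [A_succ]
    apply mul_pos
    · positivity
    apply mul_pos hr
    apply Finset.prod_pos
    intro j hj
    rw [Finset.mem_range] at hj
    have : (j:ℝ) < k := by exact_mod_cast hj
    nlinarith

lemma Gamma_prod (x : ℝ) (hx : 0 < x) (n : ℕ) :
    Real.Gamma (x + n) = Real.Gamma x * ∏ i ∈ Finset.range n, (x + i) := by
  induction n with
  | zero => simp
  | succ m ih =>
    have h1 : x + ((m+1:ℕ):ℝ) = (x + m) + 1 := by push_cast; ring
    have hne : x + (m:ℝ) ≠ 0 := by positivity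
    rw [Finset.prod_range_succ, h1, Real.Gamma_add_one hne, ih]
    push_cast
    ring

lemma fact_mul_A_half (n : ℕ) :
    ((n+1).factorial : ℝ) * A n (1/2) = ∏ i ∈ Finset.range n, (((n:ℝ)+1)/2 + i) := by
  cases n with
  | zero => simp [A_zero]
  | succ m =>
    rw [A_succ]
    rw [Finset.prod_range_succ' (fun i => ((((m+1:ℕ)):ℝ)+1)/2 + i) m]
    have h2 : (∏ i ∈ Finset.range m, (((((m+1:ℕ)):ℝ)+1)/2 + ((i+1:ℕ):ℝ))) =
        ∏ j ∈ Finset.range m, ((1:ℝ)/2 + ((3*((m+1:ℕ)):ℝ)/2 - ((j:ℝ)+1))) := by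
      rw [← Finset.prod_range_reflect
        (fun j => ((1:ℝ)/2 + ((3*((m+1:ℕ)):ℝ)/2 - ((j:ℝ)+1)))) m]
      apply Finset.prod_congr rfl
      intro i hi
      rw [Finset.mem_range] at hi
      have h1 : ((m - 1 - i : ℕ) : ℝ) = (m:ℝ) - 1 - i := by
        have he : m - 1 - i = m - (1 + i) := by omega
        rw [he, Nat.cast_sub (by omega)]
        push_cast; ring
      simp only [h1]
      push_cast
      ring
    rw [h2]
    rw [Nat.factorial_succ (m+1)]
    have hne : (((m+1).factorial : ℝ)) ≠ 0 := by positivity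
    push_cast
    field_simp
    ring

lemma Gamma_ratio (n : ℕ) :
    Real.Gamma (3*(((n+1:ℕ)):ℝ)/2 - 1) / Real.Gamma ((((n+1:ℕ)):ℝ)/2) =
      ((n+1).factorial : ℝ) * A n (1/2) := by
  have hx : (0:ℝ) < (((n+1:ℕ)):ℝ)/2 := by positivity
  have harg : 3*(((n+1:ℕ)):ℝ)/2 - 1 = (((n+1:ℕ)):ℝ)/2 + n := by push_cast; ring
  rw [harg, Gamma_prod _ hx n]
  have hGne : Real.Gamma ((((n+1:ℕ)):ℝ)/2) ≠ 0 := ne_of_gt (Real.Gamma_pos_of_pos hx)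
  rw [mul_comm, mul_div_assoc, div_self hGne, mul_one, fact_mul_A_half]
  apply Finset.prod_congr rfl; intro i _; push_cast; ring

/-- `c` in Gamma form. -/
lemma cform (n : ℕ) :
    A n (1/2) = Real.Gamma ((((n:ℝ))+1)/2 + n) /
      (Real.Gamma ((((n:ℝ))+1)/2) * ((n+1).factorial : ℝ)) := by
  have hx : (0:ℝ) < ((n:ℝ)+1)/2 := by positivity
  have hGne : Real.Gamma (((n:ℝ)+1)/2) ≠ 0 := ne_of_gt (Real.Gamma_pos_of_pos hx)
  have hfne : (((n+1).factorial : ℝ)) ≠ 0 := by positivity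
  rw [Gamma_prod _ hx n, ← fact_mul_A_half]
  field_simp

/-- Two-step ratio. -/
lemma c_ratio (n : ℕ) :
    A (n+2) (1/2) * (4*((n:ℝ)+1)*((n:ℝ)+2)*((n:ℝ)+3)) =
      A n (1/2) * ((3*(n:ℝ)+1)*(3*(n:ℝ)+3)*(3*(n:ℝ)+5)) := by
  have hx : (0:ℝ) < ((n:ℝ)+1)/2 := by positivity
  set x : ℝ := ((n:ℝ)+1)/2 with hxdef
  have hG : (0:ℝ) < Real.Gamma x := Real.Gamma_pos_of_pos hx
  have hGxn : (0:ℝ) < Real.Gamma (x + n) := by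
    apply Real.Gamma_pos_of_pos; positivity
  have h1 : A n (1/2) = Real.Gamma (x + n) / (Real.Gamma x * ((n+1).factorial : ℝ)) :=
    cform n
  have h2 : A (n+2) (1/2) = Real.Gamma ((((n+2:ℕ):ℝ)+1)/2 + (n+2:ℕ)) /
      (Real.Gamma ((((n+2:ℕ):ℝ)+1)/2) * ((n+3).factorial : ℝ)) := by
    have := cform (n+2)
    rwa [show n+2+1 = n+3 from rfl] at this
  have e1 : (((n+2:ℕ):ℝ)+1)/2 + ((n+2:ℕ):ℝ) = (x + n) + 1 + 1 + 1 := by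
    rw [hxdef]; push_cast; ring
  have e2 : (((n+2:ℕ):ℝ)+1)/2 = x + 1 := by rw [hxdef]; push_cast; ring
  have hxn0 : x + (n:ℝ) ≠ 0 := by positivity
  have hxn1 : x + (n:ℝ) + 1 ≠ 0 := by positivity
  have hxn2 : x + (n:ℝ) + 1 + 1 ≠ 0 := by positivity
  have hx0 : x ≠ 0 := ne_of_gt hx
  have e3 : Real.Gamma ((x + n) + 1 + 1 + 1) =
      (x+n+1+1) * ((x+n+1) * ((x+n) * Real.Gamma (x+n))) := by
    rw [Real.Gamma_add_one hxn2, Real.Gamma_add_one hxn1, Real.Gamma_add_one hxn0]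
  have e4 : Real.Gamma (x + 1) = x * Real.Gamma x := Real.Gamma_add_one hx0
  have e5 : ((n+3).factorial : ℝ) = ((n:ℝ)+3) * (((n:ℝ)+2) * ((n+1).factorial : ℝ)) := by
    rw [show n+3 = (n+2)+1 from rfl, Nat.factorial_succ, show n+2 = (n+1)+1 from rfl,
      Nat.factorial_succ]
    push_cast; ring
  rw [h2, e1, e2, e3, e4, e5, h1]
  have hGx0 : Real.Gamma x ≠ 0 := ne_of_gt hG
  have hf : (((n+1).factorial : ℝ)) ≠ 0 := by positivity
  have hn1 : ((n:ℝ)+2) ≠ 0 := by positivity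
  have hn2 : ((n:ℝ)+3) ≠ 0 := by positivity
  field_simp
  rw [hxdef]
  ring

/-- Summability of `∑ c_n ρ^n` for `27 ρ² < 4`. -/
lemma summable_c_rpow {ρ : ℝ} (h0 : 0 ≤ ρ) (h4 : 27 * ρ^2 < 4) :
    Summable (fun n => A n (1/2) * ρ^n) := by
  set q : ℝ := 27 * ρ^2 / 4 with hq
  have hq0 : 0 ≤ q := by positivity
  have hq1 : q < 1 := by rw [hq]; linarith
  have cpos : ∀ n, 0 < A n (1/2) := A_pos (by norm_num)
  have step : ∀ n : ℕ, A (n+2) (1/2) * ρ^(n+2) ≤ q * (A n (1/2) * ρ^n) := by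
    intro n
    have hr := c_ratio n
    have hd : (0:ℝ) < 4*((n:ℝ)+1)*((n:ℝ)+2)*((n:ℝ)+3) := by positivity
    have hc27 : A (n+2) (1/2) ≤ (27/4) * A n (1/2) := by
      rw [div_mul_eq_mul_div, le_div_iff₀ (by norm_num : (0:ℝ) < 4)]
      nlinarith [hr, (cpos n).le, sq_nonneg ((n:ℝ))]
    have hrp : (0:ℝ) ≤ ρ^n := by positivity
    calc A (n+2) (1/2) * ρ^(n+2) = (A (n+2) (1/2)) * ρ^n * ρ^2 := by ring
      _ ≤ ((27/4) * A n (1/2)) * ρ^n * ρ^2 := by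
          apply mul_le_mul_of_nonneg_right _ (by positivity)
          exact mul_le_mul_of_nonneg_right hc27 hrp
      _ = q * (A n (1/2) * ρ^n) := by rw [hq]; ring
  have bound : ∀ m : ℕ, A (2*m) (1/2) * ρ^(2*m) ≤ (A 0 (1/2)) * q^m ∧
      A (2*m+1) (1/2) * ρ^(2*m+1) ≤ (A 1 (1/2) * ρ) * q^m := by
    intro m
    induction m with
    | zero => constructor <;> simp [le_refl]
    | succ k ih =>
      constructor
      · have h := step (2*k)
        have : 2*(k+1) = 2*k+2 := by ring
        rw [this]
        calc A (2*k+2) (1/2) * ρ^(2*k+2) ≤ q * (A (2*k) (1/2) * ρ^(2*k)) := h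
          _ ≤ q * ((A 0 (1/2)) * q^k) := by
              apply mul_le_mul_of_nonneg_left ih.1 hq0
          _ = A 0 (1/2) * q^(k+1) := by ring
      · have h := step (2*k+1)
        have : 2*(k+1)+1 = (2*k+1)+2 := by ring
        rw [this]
        calc A ((2*k+1)+2) (1/2) * ρ^((2*k+1)+2) ≤ q * (A (2*k+1) (1/2) * ρ^(2*k+1)) := h
          _ ≤ q * ((A 1 (1/2) * ρ) * q^k) := by
              apply mul_le_mul_of_nonneg_left ih.2 hq0
          _ = (A 1 (1/2) * ρ) * q^(k+1) := by ring
  have pairSum : ∀ (N : ℕ) (f : ℕ → ℝ),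
      ∑ n ∈ Finset.range (2*N), f n = ∑ m ∈ Finset.range N, (f (2*m) + f (2*m+1)) := by
    intro N f
    induction N with
    | zero => simp
    | succ k ih =>
      have h2 : 2*(k+1) = (2*k+1)+1 := by ring
      rw [h2, Finset.sum_range_succ, Finset.sum_range_succ, ih, Finset.sum_range_succ]
      rw [add_assoc]
  set K : ℝ := (A 0 (1/2) + A 1 (1/2) * ρ) * (1-q)⁻¹ with hK
  apply summable_of_sum_range_le (c := K)
  · intro n
    have := (cpos n).le
    positivity
  · intro N
    have hsub : ∑ n ∈ Finset.range N, A n (1/2) * ρ^n ≤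
        ∑ n ∈ Finset.range (2*N), A n (1/2) * ρ^n := by
      apply Finset.sum_le_sum_of_subset_of_nonneg
      · apply Finset.range_subset_range.2; omega
      · intro i _ _
        have := (cpos i).le
        positivity
    have hgeom : Summable (fun m : ℕ => q^m) := summable_geometric_of_lt_one hq0 hq1
    calc ∑ n ∈ Finset.range N, A n (1/2) * ρ^n
        ≤ ∑ n ∈ Finset.range (2*N), A n (1/2) * ρ^n := hsub
      _ = ∑ m ∈ Finset.range N, (A (2*m) (1/2) * ρ^(2*m) + A (2*m+1) (1/2) * ρ^(2*m+1)) :=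
          pairSum N _
      _ ≤ ∑ m ∈ Finset.range N, (A 0 (1/2) + A 1 (1/2) * ρ) * q^m := by
          apply Finset.sum_le_sum
          intro m _
          have h := bound m
          calc A (2*m) (1/2) * ρ^(2*m) + A (2*m+1) (1/2) * ρ^(2*m+1)
              ≤ A 0 (1/2) * q^m + (A 1 (1/2) * ρ) * q^m := add_le_add h.1 h.2
            _ = (A 0 (1/2) + A 1 (1/2) * ρ) * q^m := by ring
      _ = (A 0 (1/2) + A 1 (1/2) * ρ) * ∑ m ∈ Finset.range N, q^m := by
          rw [Finset.mul_sum]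
      _ ≤ K := by
          rw [hK]
          apply mul_le_mul_of_nonneg_left _ (by
            have := (cpos 0).le; have := (cpos 1).le; positivity)
          have := Summable.sum_le_tsum (Finset.range N) (fun i _ => by positivity) hgeom
          calc ∑ m ∈ Finset.range N, q^m ≤ ∑' m : ℕ, q^m := this
            _ = (1-q)⁻¹ := tsum_geometric_of_lt_one hq0 hq1


/-- Shift identity `A_{n+1}(1) = A_n(3/2)`. -/
lemma A_shift (n : ℕ) : A (n+1) 1 = A n (3/2) := by
  cases n with
  | zero => simp [A_succ, A_zero]
  | succ m =>
    rw [A_succ, A_succ]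
    rw [Finset.prod_range_succ'
      (fun j => (1:ℝ) + (3 * (((m+1:ℕ):ℝ) + 1) / 2 - ((j:ℝ) + 1))) m]
    have h2 : (∏ j ∈ Finset.range m,
          ((1:ℝ) + (3 * (((m+1:ℕ):ℝ) + 1) / 2 - ((((j+1:ℕ)):ℝ) + 1)))) =
        ∏ j ∈ Finset.range m, ((3:ℝ)/2 + (3 * ((m:ℝ) + 1) / 2 - ((j:ℝ)+1))) := by
      apply Finset.prod_congr rfl
      intro j _
      push_cast; ring
    rw [h2]
    rw [Nat.factorial_succ (m+1)]
    have hne : (((m+1).factorial : ℝ)) ≠ 0 := by positivity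
    push_cast
    field_simp
    ring

/-- Main structural lemma: term in normal form. -/
lemma term_eq (φ : ℝ) (t : ℝ) (n : ℕ) :
    saddleTerm φ (n+1) t =
      (Complex.I * t * Complex.exp (-(Complex.I * φ)/4)) * ((A n (1/2) : ℝ) : ℂ) *
        ((Complex.I * t * Complex.exp (-(3*(Complex.I * φ))/4))/3)^n := by
  unfold saddleTerm
  have hg : ((Real.Gamma (3 * ((n+1:ℕ):ℝ) / 2 - 1) / Real.Gamma (((n+1:ℕ):ℝ) / 2) : ℝ) : ℂ) =
      (((n+1).factorial : ℝ) : ℂ) * ((A n (1/2) : ℝ) : ℂ) := by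
    rw [show (3 * ((n+1:ℕ):ℝ) / 2 - 1) = 3*(((n+1:ℕ)):ℝ)/2 - 1 by ring, Gamma_ratio]
    push_cast; ring
  rw [show (3 : ℂ) ^ (1 - ((n+1:ℕ) : ℤ)) = ((3:ℂ)^(n:ℕ))⁻¹ by
    rw [show (1 - ((n+1:ℕ) : ℤ)) = -(n:ℤ) by push_cast; ring, zpow_neg, zpow_natCast]]
  have hexp : Complex.exp (Complex.I * φ * (1/2 - 3*((n+1:ℕ):ℂ)/4)) =
      Complex.exp (-(Complex.I * φ)/4) * (Complex.exp (-(3*(Complex.I * φ))/4))^n := by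
    rw [← Complex.exp_nat_mul, ← Complex.exp_add]
    congr 1
    push_cast; ring
  rw [hg, hexp]
  have hfne : (((n+1).factorial : ℕ) : ℂ) ≠ 0 :=
    Nat.cast_ne_zero.2 (Nat.factorial_ne_zero (n+1))
  have h3ne : ((3:ℂ)^(n:ℕ)) ≠ 0 := by norm_num
  field_simp
  rw [div_pow, mul_pow, mul_pow]
  field_simp
  push_cast
  ring

lemma norm_term (φ : ℝ) (t : ℝ) (n : ℕ) :
    ‖saddleTerm φ (n+1) t‖ = A n (1/2) * (|t|/3)^n * |t| := by
  rw [term_eq]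
  have e1 : ‖Complex.exp (-(Complex.I * (φ:ℂ))/4)‖ = 1 := by
    rw [show -(Complex.I * (φ:ℂ))/4 = ((-φ/4 : ℝ):ℂ) * Complex.I by push_cast; ring]
    exact Complex.norm_exp_ofReal_mul_I _
  have e2 : ‖Complex.exp (-(3*(Complex.I * (φ:ℂ)))/4)‖ = 1 := by
    rw [show -(3*(Complex.I * (φ:ℂ)))/4 = ((-3*φ/4 : ℝ):ℂ) * Complex.I by push_cast; ring]
    exact Complex.norm_exp_ofReal_mul_I _
  have hA : |A n (1/2)| = A n (1/2) := abs_of_pos (A_pos (by norm_num) n)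
  simp only [norm_mul, norm_pow, norm_div, Complex.norm_I, Complex.norm_real,
    Real.norm_eq_abs, e1, e2, hA]
  norm_num
  ring

/-- Key summability for the `z`-series over ℂ. -/
lemma summable_norm_cz {ρ : ℝ} (h0 : 0 ≤ ρ) (h4 : 27 * ρ^2 < 4) (z : ℂ) (hz : ‖z‖ = ρ) :
    Summable (fun n => ‖((A n (1/2) : ℝ) : ℂ) * z^n‖) := by
  have : (fun n => ‖((A n (1/2) : ℝ) : ℂ) * z^n‖) = fun n => A n (1/2) * ρ^n := by
    funext n
    rw [norm_mul, norm_pow, hz, Complex.norm_real, Real.norm_eq_abs,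
      abs_of_pos (A_pos (by norm_num) n)]
  rw [this]
  exact summable_c_rpow h0 h4


end SaddleAux

open SaddleAux

theorem stmt0 (φ : ℝ) (hφ : φ ∈ Set.Ioc (-Real.pi) Real.pi)
    (s : ℝ) (hs : |s| < 2 / Real.sqrt 3) :
    (Summable fun n : ℕ => ‖saddleTerm φ (n + 1) s‖) ∧
    (∀ r : ℝ, r < 2 / Real.sqrt 3 →
      TendstoUniformlyOn
        (fun N : ℕ => fun t : ℝ => ∑ n ∈ Finset.range N, saddleTerm φ (n + 1) t)
        (fun t : ℝ => ∑' n : ℕ, saddleTerm φ (n + 1) t) atTop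
        {t : ℝ | |t| ≤ r}) ∧
    (Complex.exp (Complex.I * φ) *
          (-Complex.exp (Complex.I * φ / 2) + ∑' n : ℕ, saddleTerm φ (n + 1) s) -
        (-Complex.exp (Complex.I * φ / 2) + ∑' n : ℕ, saddleTerm φ (n + 1) s) ^ 3 / 3 =
      -(2 / 3) * Complex.exp (Complex.I * (3 * φ) / 2) - (s : ℂ) ^ 2) := by
  have sqrt3 : Real.sqrt 3 ^ 2 = 3 := Real.sq_sqrt (by norm_num)
  have sqrt3pos : 0 < Real.sqrt 3 := Real.sqrt_pos.2 (by norm_num)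
  -- translate the radius condition
  have hradius : ∀ x : ℝ, 0 ≤ x → x < 2 / Real.sqrt 3 → 27 * (x/3)^2 < 4 := by
    intro x hx0 hx
    have h1 : x * Real.sqrt 3 < 2 := by
      rw [div_eq_mul_inv] at hx
      calc x * Real.sqrt 3 < (2 * (Real.sqrt 3)⁻¹) * Real.sqrt 3 := by
            apply mul_lt_mul_of_pos_right hx sqrt3pos
        _ = 2 := by field_simp
    nlinarith [Real.sq_sqrt (show (0:ℝ) ≤ 3 by norm_num), sq_nonneg x]
  have habs : (0:ℝ) ≤ |s| := abs_nonneg s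
  have hr27 : 27 * (|s|/3)^2 < 4 := hradius _ habs hs
  -- part 1 : summability
  have hsum1 : Summable (fun n : ℕ => ‖saddleTerm φ (n + 1) s‖) := by
    have : (fun n : ℕ => ‖saddleTerm φ (n + 1) s‖) =
        fun n => A n (1/2) * (|s|/3)^n * |s| := by
      funext n; rw [norm_term]
    rw [this]
    exact (summable_c_rpow (by positivity : (0:ℝ) ≤ |s|/3) hr27).mul_right |s|
  refine ⟨hsum1, ?_, ?_⟩
  -- part 2 : uniform convergence
  · intro r hr
    set R : ℝ := max r 0 with hR
    have hR0 : 0 ≤ R := le_max_right r 0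
    have hRlt : R < 2 / Real.sqrt 3 := by
      apply max_lt hr
      positivity
    have hu : Summable (fun n => A n (1/2) * (R/3)^n * R) := by
      exact (summable_c_rpow (by positivity : (0:ℝ) ≤ R/3)
        (hradius _ hR0 hRlt)).mul_right R
    apply tendstoUniformlyOn_tsum_nat hu
    intro n t ht
    simp only [Set.mem_setOf_eq] at ht
    have htR : |t| ≤ R := le_trans ht (le_max_left r 0)
    rw [norm_term]
    have hA0 : (0:ℝ) ≤ A n (1/2) := (A_pos (by norm_num) n).le
    have hpow : (|t|/3)^n ≤ (R/3)^n := by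
      apply pow_le_pow_left₀ (by positivity) (by linarith) n
    calc A n (1/2) * (|t|/3)^n * |t| ≤ A n (1/2) * (R/3)^n * |t| := by
          apply mul_le_mul_of_nonneg_right _ (abs_nonneg t)
          exact mul_le_mul_of_nonneg_left hpow hA0
      _ ≤ A n (1/2) * (R/3)^n * R := by
          apply mul_le_mul_of_nonneg_left htR
          positivity
  -- part 3 : the cubic equation
  · set B : ℂ := Complex.I * s * Complex.exp (-(Complex.I * φ)/4) with hB
    set E : ℂ := Complex.exp (-(3*(Complex.I * φ))/4) with hE
    set z : ℂ := (Complex.I * s * E)/3 with hz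
    have hznorm : ‖z‖ = |s|/3 := by
      rw [hz, hE]
      have e2 : ‖Complex.exp (-(3*(Complex.I * (φ:ℂ)))/4)‖ = 1 := by
        rw [show -(3*(Complex.I * (φ:ℂ)))/4 = ((-3*φ/4 : ℝ):ℂ) * Complex.I by push_cast; ring]
        exact Complex.norm_exp_ofReal_mul_I _
      simp [norm_mul, norm_div, Complex.norm_I, Complex.norm_real, Real.norm_eq_abs, e2]
    have hnormsum : Summable (fun n => ‖((A n (1/2) : ℝ) : ℂ) * z^n‖) :=
      summable_norm_cz (by positivity : (0:ℝ) ≤ |s|/3) hr27 z hznorm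
    set σ : ℂ := ∑' n : ℕ, ((A n (1/2) : ℝ) : ℂ) * z^n with hσ
    -- Cauchy product : σ * σ
    have conv_eq : ∀ n : ℕ, (∑ kl ∈ Finset.HasAntidiagonal.antidiagonal n,
        (((A kl.1 (1/2) : ℝ) : ℂ) * z^kl.1) * (((A kl.2 (1/2) : ℝ) : ℂ) * z^kl.2)) =
        ((A n 1 : ℝ) : ℂ) * z^n := by
      intro n
      rw [Finset.Nat.sum_antidiagonal_eq_sum_range_succ_mk]
      have : ∀ k ∈ Finset.range (n+1),
          (((A k (1/2) : ℝ) : ℂ) * z^k) * (((A (n-k) (1/2) : ℝ) : ℂ) * z^(n-k)) =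
          ((A k (1/2) * A (n-k) (1/2) : ℝ) : ℂ) * z^n := by
        intro k hk
        rw [Finset.mem_range] at hk
        have : z^k * z^(n-k) = z^n := by
          rw [← pow_add]; congr 1; omega
        push_cast
        rw [← this]; ring
      rw [Finset.sum_congr rfl this, ← Finset.sum_mul, ← Complex.ofReal_sum]
      congr 2
      rw [convA]
      norm_num
    have hσ2 : σ * σ = ∑' n : ℕ, ((A n 1 : ℝ) : ℂ) * z^n := by
      rw [hσ, tsum_mul_tsum_eq_tsum_sum_antidiagonal_of_summable_norm hnormsum hnormsum]
      exact tsum_congr conv_eq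
    have hnormsum2 : Summable (fun n => ‖((A n 1 : ℝ) : ℂ) * z^n‖) := by
      have h := summable_norm_sum_mul_antidiagonal_of_summable_norm hnormsum hnormsum
      have : (fun n => ‖∑ kl ∈ Finset.HasAntidiagonal.antidiagonal n,
          (((A kl.1 (1/2) : ℝ) : ℂ) * z^kl.1) * (((A kl.2 (1/2) : ℝ) : ℂ) * z^kl.2)‖) =
          fun n => ‖((A n 1 : ℝ) : ℂ) * z^n‖ := by
        funext n; rw [conv_eq]
      rwa [this] at h
    -- Cauchy product : (σ*σ) * σ
    have conv_eq3 : ∀ n : ℕ, (∑ kl ∈ Finset.HasAntidiagonal.antidiagonal n,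
        (((A kl.1 1 : ℝ) : ℂ) * z^kl.1) * (((A kl.2 (1/2) : ℝ) : ℂ) * z^kl.2)) =
        ((A n (3/2) : ℝ) : ℂ) * z^n := by
      intro n
      rw [Finset.Nat.sum_antidiagonal_eq_sum_range_succ_mk]
      have : ∀ k ∈ Finset.range (n+1),
          (((A k 1 : ℝ) : ℂ) * z^k) * (((A (n-k) (1/2) : ℝ) : ℂ) * z^(n-k)) =
          ((A k 1 * A (n-k) (1/2) : ℝ) : ℂ) * z^n := by
        intro k hk
        rw [Finset.mem_range] at hk
        have : z^k * z^(n-k) = z^n := by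
          rw [← pow_add]; congr 1; omega
        push_cast
        rw [← this]; ring
      rw [Finset.sum_congr rfl this, ← Finset.sum_mul, ← Complex.ofReal_sum]
      congr 2
      rw [convA]
      norm_num
    have hσ3 : σ * σ * σ = ∑' n : ℕ, ((A n (3/2) : ℝ) : ℂ) * z^n := by
      rw [hσ2, hσ, tsum_mul_tsum_eq_tsum_sum_antidiagonal_of_summable_norm hnormsum2 hnormsum]
      exact tsum_congr conv_eq3
    -- the algebraic identity σ² = 1 + z σ³
    have key : σ^2 = 1 + z * σ^3 := by
      have hsummable2 : Summable (fun n => ((A n 1 : ℝ) : ℂ) * z^n) :=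
        Summable.of_norm hnormsum2
      have h1 : σ^2 = ∑' n : ℕ, ((A n 1 : ℝ) : ℂ) * z^n := by rw [sq]; exact hσ2
      rw [h1, Summable.tsum_eq_zero_add hsummable2]
      have h2 : ∀ n : ℕ, ((A (n+1) 1 : ℝ) : ℂ) * z^(n+1) =
          z * (((A n (3/2) : ℝ) : ℂ) * z^n) := by
        intro n
        rw [A_shift n, pow_succ]
        ring
      rw [tsum_congr h2, tsum_mul_left]
      rw [A_zero]
      push_cast
      rw [show σ^3 = σ * σ * σ by ring, hσ3]
      norm_num
    -- express S
    have hS : (∑' n : ℕ, saddleTerm φ (n + 1) s) = B * σ := by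
      rw [hσ, ← tsum_mul_left]
      apply tsum_congr
      intro n
      rw [term_eq φ s n, hB, hz, hE]
      ring
    rw [hS]
    -- exp identities
    set W : ℂ := Complex.exp (Complex.I * φ / 2) with hW
    have hW2 : Complex.exp (Complex.I * φ) = W^2 := by
      rw [hW, sq, ← Complex.exp_add]
      congr 1; ring
    have hW3 : Complex.exp (Complex.I * (3*φ) / 2) = W^3 := by
      rw [hW, pow_succ, sq, ← Complex.exp_add, ← Complex.exp_add]
      congr 1; push_cast; ring
    have hee : W * (Complex.exp (-(Complex.I * (φ:ℂ))/4) *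
        Complex.exp (-(Complex.I * (φ:ℂ))/4)) = 1 := by
      rw [hW, ← Complex.exp_add, ← Complex.exp_add, show
        Complex.I * φ / 2 + (-(Complex.I * φ)/4 + -(Complex.I * φ)/4) = 0 by ring,
        Complex.exp_zero]
    have heee : Complex.exp (-(Complex.I * (φ:ℂ))/4) * Complex.exp (-(Complex.I * (φ:ℂ))/4) *
        Complex.exp (-(Complex.I * (φ:ℂ))/4) = E := by
      rw [hE, ← Complex.exp_add, ← Complex.exp_add]
      congr 1; ring
    have hB2 : W * B^2 = -(s:ℂ)^2 := by
      rw [hB]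
      linear_combination ((s:ℂ)^2 * Complex.I^2) * hee + (s:ℂ)^2 * Complex.I_sq
    have hB3 : B^3 = -3*(s:ℂ)^2 * z := by
      rw [hB, hz]
      linear_combination (Complex.I^3*(s:ℂ)^3) * heee + (Complex.I*(s:ℂ)^3*E) * Complex.I_sq
    rw [hW2, hW3]
    linear_combination σ^2 * hB2 + (-(σ^3)/3) * hB3 + (-(s:ℂ)^2) * key
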